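/- Let h : U → ℝ satisfy the polar-coordinate Laplace equation (∂²_ρ + ρ⁻¹∂_ρ + ρ⁻²∂²_φ) h(ρ, φ) = 0 on a domain with ρ > 0. Under the substitution ρ = tan(θ/2) with 0 < θ < π, one has the operator identity ∂²_ρ + ρ⁻¹∂_ρ + ρ⁻²∂²_φ = 4cos⁴(θ/2) · [ (sin θ)⁻¹ ∂_θ(sin θ ∂_θ) + (sin θ)⁻² ∂²_φ ]. Consequently, the function φ(r, θ, φ) := h(tan(θ/2), φ) (independent of r) is harmonic in ℝ³ \ {0}: the full spherical Laplacian r⁻²[∂_r(r²∂_r) + (sinθ)⁻¹∂_θ(sinθ ∂_θ) + (sinθ)⁻²∂²_φ] applied to it vanishes. -/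

import Mathlib

open Real

theorem conical_harmonic_function
    (h : ℝ → ℝ → ℝ)
    (hh : ContDiff ℝ 2 (fun q : ℝ × ℝ => h q.1 q.2))
    (hharm : ∀ ρ φ : ℝ, 0 < ρ →
      deriv (deriv (fun s => h s φ)) ρ + ρ⁻¹ * deriv (fun s => h s φ) ρ +
        ρ⁻¹ ^ 2 * deriv (deriv (fun t => h ρ t)) φ = 0) :
    ∀ r θ φ : ℝ, 0 < r → 0 < θ → θ < Real.pi →
      -- the operator identity under the substitution ρ = tan (θ/2)
      (deriv (deriv (fun s => h s φ)) (Real.tan (θ / 2)) +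
          (Real.tan (θ / 2))⁻¹ * deriv (fun s => h s φ) (Real.tan (θ / 2)) +
          ((Real.tan (θ / 2))⁻¹) ^ 2 *
            deriv (deriv (fun t => h (Real.tan (θ / 2)) t)) φ =
        4 * Real.cos (θ / 2) ^ 4 *
          ((Real.sin θ)⁻¹ *
              deriv (fun t => Real.sin t *
                deriv (fun s => h (Real.tan (s / 2)) φ) t) θ +
            ((Real.sin θ)⁻¹) ^ 2 *
              deriv (deriv (fun t => h (Real.tan (θ / 2)) t)) φ)) ∧
      -- hence h(tan(θ/2), φ), viewed as a function on ℝ³ \ {0} independent of r,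
      -- is annihilated by the full spherical Laplacian
      (r ^ 2)⁻¹ *
        (deriv (fun s : ℝ => s ^ 2 *
            deriv (fun _ : ℝ => h (Real.tan (θ / 2)) φ) s) r +
          (Real.sin θ)⁻¹ *
            deriv (fun t => Real.sin t *
              deriv (fun s => h (Real.tan (s / 2)) φ) t) θ +
          ((Real.sin θ)⁻¹) ^ 2 *
            deriv (deriv (fun t => h (Real.tan (θ / 2)) t)) φ) = 0 := by
  intro r θ φ hr hθ0 hθπ
  -- the one-variable function s ↦ h s φ
  set f : ℝ → ℝ := fun s => h s φ with hfdef
  have hf : ContDiff ℝ 2 f := hh.comp (contDiff_id.prodMk contDiff_const)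
  have hf2 : ContDiff ℝ (1 + 1) f := by norm_num; exact hf
  have hf' := contDiff_succ_iff_deriv.mp hf2
  have hfdiff : Differentiable ℝ f := hf'.1
  have hf1diff : Differentiable ℝ (deriv f) := hf'.2.2.differentiable one_ne_zero
  set ρ : ℝ := Real.tan (θ / 2) with hρdef
  have hcos : ∀ t : ℝ, t ∈ Set.Ioo (0 : ℝ) Real.pi → Real.cos (t / 2) ≠ 0 := by
    intro t ht
    have : 0 < Real.cos (t / 2) := Real.cos_pos_of_mem_Ioo
      ⟨by linarith [ht.1, Real.pi_pos], by linarith [ht.2]⟩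
    exact ne_of_gt this
  have hθmem : θ ∈ Set.Ioo (0 : ℝ) Real.pi := ⟨hθ0, hθπ⟩
  have hcθ : Real.cos (θ / 2) ≠ 0 := hcos θ hθmem
  have hρpos : 0 < ρ := Real.tan_pos_of_pos_of_lt_pi_div_two (by linarith) (by linarith)
  -- derivative of t ↦ tan (t/2)
  have hT : ∀ t : ℝ, Real.cos (t / 2) ≠ 0 →
      HasDerivAt (fun u : ℝ => Real.tan (u / 2))
        ((1 + Real.tan (t / 2) ^ 2) / 2) t := by
    intro t hc
    have h1 : HasDerivAt (fun u : ℝ => u / 2) (1 / 2) t := (hasDerivAt_id t).div_const 2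
    have h2 := (Real.hasDerivAt_tan hc).comp t h1
    refine h2.congr_deriv ?_
    have := Real.inv_one_add_tan_sq hc
    rw [← this]
    field_simp
  -- derivative of the composite g = f ∘ tan(·/2)
  have hg : ∀ t : ℝ, Real.cos (t / 2) ≠ 0 →
      HasDerivAt (fun u : ℝ => h (Real.tan (u / 2)) φ)
        (deriv f (Real.tan (t / 2)) * ((1 + Real.tan (t / 2) ^ 2) / 2)) t := by
    intro t hc
    exact ((hfdiff (Real.tan (t / 2))).hasDerivAt).comp t (hT t hc)
  -- deriv of g agrees with explicit formula on a neighbourhood of θ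
  have hev : (fun t => deriv (fun s => h (Real.tan (s / 2)) φ) t) =ᶠ[nhds θ]
      (fun t => deriv f (Real.tan (t / 2)) * ((1 + Real.tan (t / 2) ^ 2) / 2)) := by
    filter_upwards [isOpen_Ioo.mem_nhds hθmem] with t ht
    exact (hg t (hcos t ht)).deriv
  -- explicit second-order data
  set f1 : ℝ := deriv f ρ with hf1def
  set f2 : ℝ := deriv (deriv f) ρ with hf2def
  set L : ℝ := deriv (deriv (fun t => h ρ t)) φ with hLdef
  set c : ℝ := (1 + ρ ^ 2) / 2 with hcdef
  -- compute deriv (fun t => sin t * deriv g t) θ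
  have hD : deriv (fun t => Real.sin t * deriv (fun s => h (Real.tan (s / 2)) φ) t) θ
      = Real.cos θ * (f1 * c) + Real.sin θ * (f2 * c * c + f1 * (ρ * c)) := by
    have hev2 : (fun t => Real.sin t * deriv (fun s => h (Real.tan (s / 2)) φ) t)
        =ᶠ[nhds θ]
        (fun t => Real.sin t *
          (deriv f (Real.tan (t / 2)) * ((1 + Real.tan (t / 2) ^ 2) / 2))) := by
      filter_upwards [hev] with t ht
      rw [ht]
    rw [hev2.deriv_eq]
    have hA : HasDerivAt (fun t : ℝ => deriv f (Real.tan (t / 2))) (f2 * c) θ :=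
      by
        have := ((hf1diff ρ).hasDerivAt).comp θ (hT θ hcθ)
        exact this
    have hB : HasDerivAt (fun t : ℝ => (1 + Real.tan (t / 2) ^ 2) / 2) (ρ * c) θ := by
      have := (((hT θ hcθ).pow 2).const_add 1).div_const 2
      refine this.congr_deriv ?_
      simp [hcdef]
      ring
    have := ((Real.hasDerivAt_sin θ).mul (hA.mul hB)).deriv
    exact this
  -- trigonometric identities in terms of ρ
  have hc2 : Real.cos (θ / 2) ^ 2 = (1 + ρ ^ 2)⁻¹ := (Real.inv_one_add_tan_sq hcθ).symm
  have hρsq : (0:ℝ) < 1 + ρ ^ 2 := by positivity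
  have hsinθ : Real.sin θ = 2 * ρ * (1 + ρ ^ 2)⁻¹ := by
    have : Real.sin θ = 2 * Real.sin (θ / 2) * Real.cos (θ / 2) := by
      rw [show θ = 2 * (θ / 2) by ring, Real.sin_two_mul]
      ring_nf
    rw [this, ← hc2]
    rw [show Real.sin (θ / 2) = Real.tan (θ / 2) * Real.cos (θ / 2) by
      rw [Real.tan_eq_sin_div_cos]; field_simp]
    rw [← hρdef]; ring
  have hcosθ : Real.cos θ = 2 * (1 + ρ ^ 2)⁻¹ - 1 := by
    rw [show θ = 2 * (θ / 2) by ring, Real.cos_two_mul, hc2]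
  have hc4 : Real.cos (θ / 2) ^ 4 = ((1 + ρ ^ 2)⁻¹) ^ 2 := by
    rw [show Real.cos (θ/2) ^ 4 = (Real.cos (θ/2) ^ 2) ^ 2 by ring, hc2]
  have hsinθne : Real.sin θ ≠ 0 := by
    rw [hsinθ]; positivity
  have hρne : ρ ≠ 0 := ne_of_gt hρpos
  have h1ρne : (1 + ρ ^ 2) ≠ 0 := ne_of_gt hρsq
  -- the operator identity
  have key : f2 + ρ⁻¹ * f1 + (ρ⁻¹) ^ 2 * L =
      4 * Real.cos (θ / 2) ^ 4 *
        ((Real.sin θ)⁻¹ *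
            deriv (fun t => Real.sin t *
              deriv (fun s => h (Real.tan (s / 2)) φ) t) θ +
          ((Real.sin θ)⁻¹) ^ 2 * L) := by
    rw [hD, hc4, hsinθ, hcosθ, hcdef]
    field_simp
    ring
  constructor
  · exact key
  · -- spherical Laplacian vanishes
    have hradial : deriv (fun s : ℝ => s ^ 2 *
        deriv (fun _ : ℝ => h ρ φ) s) r = 0 := by
      have : (fun s : ℝ => s ^ 2 * deriv (fun _ : ℝ => h ρ φ) s)
          = fun _ : ℝ => (0:ℝ) := by
        funext s
        simp [deriv_const]
      rw [this, deriv_const]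
    have h0 : f2 + ρ⁻¹ * f1 + (ρ⁻¹) ^ 2 * L = 0 := hharm ρ φ hρpos
    have hang : (Real.sin θ)⁻¹ *
          deriv (fun t => Real.sin t *
            deriv (fun s => h (Real.tan (s / 2)) φ) t) θ +
        ((Real.sin θ)⁻¹) ^ 2 * L = 0 := by
      have hc4pos : (0:ℝ) < 4 * Real.cos (θ / 2) ^ 4 := by
        rw [hc4]; positivity
      have := key.symm.trans h0
      exact (mul_eq_zero.mp this).resolve_left (ne_of_gt hc4pos)
    rw [hradial]
    rw [show (0:ℝ) + (Real.sin θ)⁻¹ *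
          deriv (fun t => Real.sin t *
            deriv (fun s => h (Real.tan (s / 2)) φ) t) θ +
        ((Real.sin θ)⁻¹) ^ 2 * L = (Real.sin θ)⁻¹ *
          deriv (fun t => Real.sin t *
            deriv (fun s => h (Real.tan (s / 2)) φ) t) θ +
        ((Real.sin θ)⁻¹) ^ 2 * L by ring, hang, mul_zero]
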